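/- Define X_0(n,m) = Σ_{(m_0,…,m_n)} (−1)^{ε(m_*)} · Σ_{i=1}^{n} (−1)^{m_0+⋯+m_{i−1}}, the sum over all (n+1)-tuples of nonnegative integers with m_0+⋯+m_n = m. Then for all integers j ≥ 1 and k ≥ 1: X_0(2j, 2k) = 2j·C(j+k, j); X_0(2j, 2k−1) = 0; X_0(2j−1, 2k) = (2j+2k−1)·C(j+k−1, k); and X_0(2j−1, 2k−1) = 2k·C(j+k−1, k). Here C(a,b) denotes the binomial coefficient. -/

import Mathlib

open Finset

/-- `eps n v = v (n-1) + v (n-3) + ⋯`: the exponent of the sign of the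
shuffle encoded by the tuple `v = (m_0, …, m_n)`. -/
def eps (n : ℕ) (v : Fin (n+1) → ℕ) : ℕ :=
  ∑ t ∈ Finset.range ((n+1)/2), v ⟨n - 1 - 2*t, by omega⟩

/-- `psumV n v i = v 0 + v 1 + ⋯ + v (i-1)`. -/
def psumV (n : ℕ) (v : Fin (n+1) → ℕ) (i : ℕ) : ℕ :=
  ∑ t : Fin (n+1), if (t : ℕ) < i then v t else 0

/-- `X₀(n,m)`: the sum over all shuffles (encoded by `(n+1)`-tuples summing
to `m`) of the oriented sign sum `sgn σ · Σ_{i=1}^n sgn_σ(a_i, b_1, …, b_m)`. -/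
def X0 (n m : ℕ) : ℤ :=
  ∑ v ∈ Finset.Nat.antidiagonalTuple (n+1) m,
    (-1 : ℤ) ^ eps n v * ∑ i ∈ Finset.Icc 1 n, (-1 : ℤ) ^ psumV n v i

/-- The signed count of shuffles (Gaussian binomial at `q = -1`). -/
def Ag (n m : ℕ) : ℤ :=
  ∑ v ∈ Finset.Nat.antidiagonalTuple (n+1) m, (-1 : ℤ) ^ eps n v

/-- closed form for `Ag`. -/
def acf (n m : ℕ) : ℤ :=
  if n % 2 = 1 ∧ m % 2 = 1 then 0 else ((n/2 + m/2).choose (n/2) : ℤ)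

/-- closed form for `X0`. -/
def xcf (n m : ℕ) : ℤ :=
  if n % 2 = 0 then
    (if m % 2 = 1 then 0 else (n : ℤ) * ((n/2 + m/2).choose (n/2)))
  else
    (if m % 2 = 0 then ((n : ℤ) + m) * ((n/2 + m/2).choose (m/2))
     else ((m : ℤ) + 1) * ((n/2 + m/2 + 1).choose (m/2 + 1)))

lemma sum_antidiagonalTuple_succ {M : Type*} [AddCommMonoid M] (k m : ℕ)
    (f : (Fin (k+1) → ℕ) → M) :
    ∑ v ∈ Finset.Nat.antidiagonalTuple (k+1) m, f v
      = ∑ p ∈ Finset.HasAntidiagonal.antidiagonal m, ∑ w ∈ Finset.Nat.antidiagonalTuple k p.2,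
          f (Fin.cons p.1 w) := by
  rw [Finset.sum_sigma']
  refine Finset.sum_nbij' (fun v => ⟨(v 0, ∑ i, Fin.tail v i), Fin.tail v⟩)
    (fun x => Fin.cons x.1.1 x.2) ?_ ?_ ?_ ?_ ?_
  · intro v hv
    rw [Finset.Nat.mem_antidiagonalTuple] at hv
    refine Finset.mem_sigma.mpr ⟨?_, ?_⟩
    · rw [Finset.HasAntidiagonal.mem_antidiagonal, ← hv, Fin.sum_univ_succ]
      rfl
    · exact Finset.Nat.mem_antidiagonalTuple.mpr rfl
  · intro x hx
    rw [Finset.mem_sigma] at hx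
    rw [Finset.Nat.mem_antidiagonalTuple, Fin.sum_cons,
      Finset.Nat.mem_antidiagonalTuple.mp hx.2]
    exact Finset.HasAntidiagonal.mem_antidiagonal.mp hx.1
  · intro v _
    exact Fin.cons_self_tail v
  · intro x hx
    rw [Finset.mem_sigma] at hx
    have h2 := Finset.Nat.mem_antidiagonalTuple.mp hx.2
    obtain ⟨⟨p1, p2⟩, w⟩ := x
    simp only [Fin.cons_zero, Fin.tail_cons] at h2 ⊢
    rw [h2]
  · intro v _
    exact congrArg f (Fin.cons_self_tail v).symm

lemma cons_succ_mk {n : ℕ} (x : ℕ) (w : Fin (n+1) → ℕ) (j : ℕ) (h : j + 1 < n + 2) :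
    (Fin.cons x w : Fin (n+2) → ℕ) ⟨j+1, h⟩ = w ⟨j, by omega⟩ := by
  have hj : j < n + 1 := by omega
  exact Fin.cons_succ (α := fun _ => ℕ) x w ⟨j, hj⟩

lemma eps_cons (n x : ℕ) (w : Fin (n+1) → ℕ) :
    eps (n+1) (Fin.cons x w) = (if n % 2 = 0 then x else 0) + eps n w := by
  rcases Nat.even_or_odd' n with ⟨c, rfl | rfl⟩
  · -- n = 2c
    have hr1 : (2*c+1+1)/2 = c + 1 := by omega
    have hr2 : (2*c+1)/2 = c := by omega
    simp only [eps, hr1, hr2, if_pos (Nat.mul_mod_right 2 c)]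
    rw [Finset.sum_range_succ]
    have hlast : (⟨2*c+1-1-2*c, by omega⟩ : Fin (2*c+2)) = ⟨0, by omega⟩ := by
      simp only [Fin.mk.injEq]; omega
    rw [hlast]
    have h00 : (⟨0, by omega⟩ : Fin (2*c+2)) = 0 := by
      apply Fin.ext; simp
    rw [h00, Fin.cons_zero, add_comm]
    congr 1
    apply Finset.sum_congr rfl
    intro t ht
    rw [Finset.mem_range] at ht
    have hidx : (⟨2*c+1-1-2*t, by omega⟩ : Fin (2*c+2)) =
        ⟨(2*c-1-2*t)+1, by omega⟩ := by simp only [Fin.mk.injEq]; omega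
    rw [hidx]
    exact cons_succ_mk x w _ _
  · -- n = 2c+1
    have hr1 : (2*c+1+1+1)/2 = c + 1 := by omega
    have hr2 : (2*c+1+1)/2 = c + 1 := by omega
    have hodd : ¬((2*c+1) % 2 = 0) := by omega
    simp only [eps, hr1, hr2, if_neg hodd, zero_add]
    apply Finset.sum_congr rfl
    intro t ht
    rw [Finset.mem_range] at ht
    have hidx : (⟨2*c+1+1-1-2*t, by omega⟩ : Fin (2*c+3)) =
        ⟨(2*c+1-1-2*t)+1, by omega⟩ := by simp only [Fin.mk.injEq]; omega
    rw [hidx]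
    exact cons_succ_mk x w _ _

lemma neg_one_pow_eps_cons (n x : ℕ) (w : Fin (n+1) → ℕ) :
    (-1 : ℤ) ^ eps (n+1) (Fin.cons x w)
      = ((-1 : ℤ)^(n+1))^x * (-1) ^ eps n w := by
  rw [eps_cons, pow_add]
  congr 1
  rcases Nat.even_or_odd' n with ⟨c, rfl | rfl⟩
  · rw [if_pos (by omega : (2*c) % 2 = 0)]
    have : ((-1 : ℤ))^(2*c+1) = -1 := by
      rw [pow_succ, pow_mul]; norm_num
    rw [this]
  · rw [if_neg (by omega : ¬ (2*c+1) % 2 = 0)]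
    have : ((-1 : ℤ))^(2*c+1+1) = 1 := by
      rw [show 2*c+1+1 = 2*(c+1) by ring, pow_mul]; norm_num
    rw [this, pow_zero, one_pow]

lemma psumV_cons (n x : ℕ) (w : Fin (n+1) → ℕ) (i : ℕ) :
    psumV (n+1) (Fin.cons x w) (i+1) = x + psumV n w i := by
  unfold psumV
  rw [Fin.sum_univ_succ]
  congr 1
  · simp

lemma psumV_zero (n : ℕ) (w : Fin (n+1) → ℕ) : psumV n w 0 = 0 := by
  simp [psumV]

lemma sum_Icc_one (k : ℕ) (f : ℕ → ℤ) :
    ∑ i ∈ Finset.Icc 1 k, f i = ∑ i ∈ Finset.range k, f (i+1) := by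
  rw [← Finset.Ico_add_one_right_eq_Icc, Finset.sum_Ico_eq_sum_range]
  simp [add_comm]

lemma inner_cons (n x : ℕ) (w : Fin (n+1) → ℕ) :
    ∑ i ∈ Finset.Icc 1 (n+1), (-1:ℤ)^psumV (n+1) (Fin.cons x w) i
      = (-1:ℤ)^x * (1 + ∑ i ∈ Finset.Icc 1 n, (-1:ℤ)^psumV n w i) := by
  rw [sum_Icc_one]
  have : ∀ i, (-1:ℤ)^psumV (n+1) (Fin.cons x w) (i+1)
      = (-1:ℤ)^x * (-1:ℤ)^psumV n w i := by
    intro i; rw [psumV_cons, pow_add]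
  simp_rw [this]
  rw [← Finset.mul_sum]
  congr 1
  rw [Finset.sum_range_succ', psumV_zero, pow_zero, sum_Icc_one]
  ring

lemma Ag_succ (n m : ℕ) :
    Ag (n+1) m = ∑ i ∈ Finset.range (m+1), ((-1:ℤ)^(n+1))^i * Ag n (m-i) := by
  unfold Ag
  rw [sum_antidiagonalTuple_succ, Finset.Nat.sum_antidiagonal_eq_sum_range_succ_mk]
  apply Finset.sum_congr rfl
  intro i _
  rw [Finset.mul_sum]
  apply Finset.sum_congr rfl
  intro w _
  exact neg_one_pow_eps_cons n i w

lemma X0_succ (n m : ℕ) :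
    X0 (n+1) m = ∑ i ∈ Finset.range (m+1), ((-1:ℤ)^n)^i * (Ag n (m-i) + X0 n (m-i)) := by
  unfold X0
  rw [sum_antidiagonalTuple_succ, Finset.Nat.sum_antidiagonal_eq_sum_range_succ_mk]
  apply Finset.sum_congr rfl
  intro i _
  have key : ∀ w : Fin (n+1) → ℕ,
      (-1:ℤ)^eps (n+1) (Fin.cons i w) * ∑ l ∈ Finset.Icc 1 (n+1),
          (-1:ℤ)^psumV (n+1) (Fin.cons i w) l
      = ((-1:ℤ)^n)^i * ((-1:ℤ)^eps n w
          + (-1:ℤ)^eps n w * ∑ l ∈ Finset.Icc 1 n, (-1:ℤ)^psumV n w l) := by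
    intro w
    rw [neg_one_pow_eps_cons, inner_cons]
    have hs : ((-1:ℤ)^(n+1))^i * (-1:ℤ)^i = ((-1:ℤ)^n)^i := by
      rw [← mul_pow]
      congr 1
      rw [pow_succ]; ring
    calc ((-1:ℤ)^(n+1))^i * (-1:ℤ)^eps n w *
          ((-1:ℤ)^i * (1 + ∑ l ∈ Finset.Icc 1 n, (-1:ℤ)^psumV n w l))
        = (((-1:ℤ)^(n+1))^i * (-1:ℤ)^i) * ((-1:ℤ)^eps n w
            + (-1:ℤ)^eps n w * ∑ l ∈ Finset.Icc 1 n, (-1:ℤ)^psumV n w l) := by ring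
      _ = _ := by rw [hs]
  simp_rw [key]
  rw [← Finset.mul_sum, Finset.sum_add_distrib]
  rfl

lemma conv_rec (s : ℤ) (g F : ℕ → ℤ)
    (h : ∀ m, F m = ∑ i ∈ Finset.range (m+1), s^i * g (m-i)) (m : ℕ) :
    F (m+1) = g (m+1) + s * F m := by
  rw [h, Finset.sum_range_succ']
  simp only [pow_zero, one_mul, Nat.sub_zero]
  rw [h, Finset.mul_sum, add_comm]
  congr 1
  apply Finset.sum_congr rfl
  intro i _
  have hs : m + 1 - (i+1) = m - i := by omega
  rw [hs, pow_succ]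
  ring

lemma Ag_rec (n m : ℕ) : Ag (n+1) (m+1) = Ag n (m+1) + (-1:ℤ)^(n+1) * Ag (n+1) m :=
  conv_rec ((-1:ℤ)^(n+1)) (fun z => Ag n z) (fun z => Ag (n+1) z) (Ag_succ n) m

lemma X0_rec (n m : ℕ) :
    X0 (n+1) (m+1) = (Ag n (m+1) + X0 n (m+1)) + (-1:ℤ)^n * X0 (n+1) m :=
  conv_rec ((-1:ℤ)^n) (fun z => Ag n z + X0 n z) (fun z => X0 (n+1) z) (X0_succ n) m

lemma Ag_zero (m : ℕ) : Ag 0 m = 1 := by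
  simp [Ag, eps]

lemma X0_zero (m : ℕ) : X0 0 m = 0 := by
  simp [X0]

lemma Ag_m0 (n : ℕ) : Ag n 0 = 1 := by
  rw [Ag, Finset.Nat.antidiagonalTuple_zero_right]
  simp [eps]

lemma X0_m0 (n : ℕ) : X0 n 0 = n := by
  rw [X0, Finset.Nat.antidiagonalTuple_zero_right]
  simp [eps, psumV]

lemma acf_ee (a b : ℕ) : acf (2*a) (2*b) = ((a+b).choose a : ℤ) := by
  rw [acf, if_neg (by omega), (by omega : 2*a/2 = a), (by omega : 2*b/2 = b)]

lemma acf_eo (a b : ℕ) : acf (2*a) (2*b+1) = ((a+b).choose a : ℤ) := by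
  rw [acf, if_neg (by omega), (by omega : 2*a/2 = a), (by omega : (2*b+1)/2 = b)]

lemma acf_oe (a b : ℕ) : acf (2*a+1) (2*b) = ((a+b).choose a : ℤ) := by
  rw [acf, if_neg (by omega), (by omega : (2*a+1)/2 = a), (by omega : 2*b/2 = b)]

lemma acf_oo (a b : ℕ) : acf (2*a+1) (2*b+1) = 0 := by
  rw [acf, if_pos (by omega)]

lemma xcf_ee (a b : ℕ) : xcf (2*a) (2*b) = 2*(a:ℤ) * ((a+b).choose a : ℤ) := by
  rw [xcf, if_pos (by omega), if_neg (by omega)]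
  rw [(by omega : 2*a/2 = a), (by omega : 2*b/2 = b)]
  push_cast; ring

lemma xcf_eo (a b : ℕ) : xcf (2*a) (2*b+1) = 0 := by
  rw [xcf, if_pos (by omega), if_pos (by omega)]

lemma xcf_oe (a b : ℕ) :
    xcf (2*a+1) (2*b) = (2*(a:ℤ)+2*b+1) * ((a+b).choose b : ℤ) := by
  rw [xcf, if_neg (by omega), if_pos (by omega)]
  rw [(by omega : (2*a+1)/2 = a), (by omega : 2*b/2 = b)]
  push_cast; ring

lemma xcf_oo (a b : ℕ) :
    xcf (2*a+1) (2*b+1) = (2*(b:ℤ)+2) * ((a+b+1).choose (b+1) : ℤ) := by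
  rw [xcf, if_neg (by omega), if_neg (by omega)]
  rw [(by omega : (2*a+1)/2 = a), (by omega : (2*b+1)/2 = b)]
  push_cast; ring

lemma neg_one_pow_even (c : ℕ) : ((-1:ℤ))^(2*c) = 1 := by
  rw [pow_mul]; norm_num

lemma neg_one_pow_odd (c : ℕ) : ((-1:ℤ))^(2*c+1) = -1 := by
  rw [pow_succ, pow_mul]; norm_num

/-- symmetry of choose, cast version -/
lemma choose_symm' (a b : ℕ) : ((a+b).choose a : ℤ) = ((a+b).choose b : ℤ) := by
  congr 1
  rw [← Nat.choose_symm (by omega : a ≤ a + b)]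
  congr 1
  omega

/-- `(k+1) * C(n+1, k+1) = (n+1) * C(n, k)` cast version -/
lemma succ_mul_choose' (n k : ℕ) :
    ((k:ℤ)+1) * ((n+1).choose (k+1) : ℤ) = ((n:ℤ)+1) * (n.choose k : ℤ) := by
  have h2 : (n+1) * n.choose k = (n+1).choose (k+1) * (k+1) :=
    Nat.add_one_mul_choose_eq n k
  push_cast at h2
  linarith

lemma acf_id (n m : ℕ) :
    acf (n+1) (m+1) = acf n (m+1) + (-1:ℤ)^(n+1) * acf (n+1) m := by
  rcases Nat.even_or_odd' n with ⟨a, rfl | rfl⟩ <;>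
    rcases Nat.even_or_odd' m with ⟨b, rfl | rfl⟩
  · -- n = 2a, m = 2b : acf(2a+1, 2b+1) = acf(2a, 2b+1) - acf(2a+1, 2b)
    rw [show 2*a+1 = 2*a+1 from rfl, neg_one_pow_odd, acf_oo, acf_eo, acf_oe]
    ring
  · -- n = 2a, m = 2b+1 : acf(2a+1, 2b+2) = acf(2a, 2b+2) - acf(2a+1, 2b+1)
    rw [neg_one_pow_odd, show 2*b+1+1 = 2*(b+1) from by ring, acf_oe, acf_ee, acf_oo]
    ring
  · -- n = 2a+1, m = 2b : acf(2a+2, 2b+1) = acf(2a+1, 2b+1) + acf(2a+2, 2b)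
    rw [show 2*a+1+1 = 2*(a+1) from by ring, neg_one_pow_even, acf_eo, acf_oo, acf_ee]
    have : a+1+b = a+b+1 := by ring
    rw [this]; ring
  · -- n = 2a+1, m = 2b+1 : acf(2a+2, 2b+2) = acf(2a+1, 2b+2) + acf(2a+2, 2b+1)
    rw [show 2*a+1+1 = 2*(a+1) from by ring, show 2*b+1+1 = 2*(b+1) from by ring,
      neg_one_pow_even, acf_ee, acf_oe, acf_eo]
    have hp : (a+b+2).choose (a+1) = (a+b+1).choose a + (a+b+1).choose (a+1) :=
      Nat.choose_succ_succ (a+b+1) a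
    rw [show a+1+(b+1) = a+b+2 from by ring, show a+(b+1) = a+b+1 from by ring,
      show a+1+b = a+b+1 from by ring, hp]
    push_cast; ring

lemma xcf_id (n m : ℕ) :
    xcf (n+1) (m+1) = acf n (m+1) + xcf n (m+1) + (-1:ℤ)^n * xcf (n+1) m := by
  rcases Nat.even_or_odd' n with ⟨a, rfl | rfl⟩ <;>
    rcases Nat.even_or_odd' m with ⟨b, rfl | rfl⟩
  · -- n = 2a, m = 2b
    rw [neg_one_pow_even, xcf_oo, acf_eo, xcf_eo, xcf_oe]
    have h1 := succ_mul_choose' (a+b) b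
    have h2 := choose_symm' a b
    push_cast at h1 h2 ⊢
    linear_combination 2*h1 - h2
  · -- n = 2a, m = 2b+1
    rw [neg_one_pow_even, show 2*b+1+1 = 2*(b+1) from by ring, xcf_oe, acf_ee, xcf_ee,
      xcf_oo]
    have h2 : ((a+(b+1)).choose a : ℤ) = ((a+(b+1)).choose (b+1) : ℤ) := choose_symm' a (b+1)
    rw [show a+(b+1) = a+b+1 from by ring] at h2
    rw [show a+(b+1) = a+b+1 from by ring]
    push_cast at h2 ⊢
    linear_combination (-(2*(a:ℤ)+1)) * h2
  · -- n = 2a+1, m = 2b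
    rw [neg_one_pow_odd, show 2*a+1+1 = 2*(a+1) from by ring, xcf_eo, acf_oo, xcf_oo,
      xcf_ee]
    have h1 := succ_mul_choose' (a+b) b
    have h2 := succ_mul_choose' (a+b) a
    have h3 := choose_symm' a b
    rw [show a+1+b = a+b+1 from by ring]
    push_cast at h1 h2 h3 ⊢
    linear_combination 2*h2 - 2*h1 + (2*(a:ℤ)+2*(b:ℤ)+2)*h3
  · -- n = 2a+1, m = 2b+1
    rw [neg_one_pow_odd, show 2*a+1+1 = 2*(a+1) from by ring,
      show 2*b+1+1 = 2*(b+1) from by ring, xcf_ee, acf_oe, xcf_oe, xcf_eo]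
    have h1 := succ_mul_choose' (a+b+1) a
    rw [show a+b+1+1 = a+b+2 from by ring] at h1
    have h3 : ((a+(b+1)).choose a : ℤ) = ((a+(b+1)).choose (b+1) : ℤ) := choose_symm' a (b+1)
    rw [show a+(b+1) = a+b+1 from by ring] at h3
    rw [show a+1+(b+1) = a+b+2 from by ring, show a+(b+1) = a+b+1 from by ring]
    push_cast at h1 h3 ⊢
    linear_combination 2*h1 + (2*(a:ℤ)+2*(b:ℤ)+3)*h3

lemma main_eq : ∀ n : ℕ, (∀ m, Ag n m = acf n m) ∧ (∀ m, X0 n m = xcf n m) := by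
  intro n
  induction n with
  | zero =>
    constructor
    · intro m
      rw [Ag_zero, acf, if_neg (by omega)]
      simp
    · intro m
      rw [X0_zero, xcf, if_pos (by omega)]
      split <;> simp
  | succ n ih =>
    have hA : ∀ m, Ag (n+1) m = acf (n+1) m := by
      intro m
      induction m with
      | zero =>
        rw [Ag_m0, acf, if_neg (by omega)]
        simp
      | succ m ihm =>
        rw [Ag_rec, ih.1, ihm, acf_id]
    refine ⟨hA, ?_⟩
    intro m
    induction m with
    | zero =>
      rw [X0_m0, xcf]
      rcases Nat.even_or_odd' (n+1) with ⟨c, hc | hc⟩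
      · rw [if_pos (by omega), if_neg (by omega), hc]
        have : 2*c/2 = c := by omega
        rw [this, Nat.add_zero, Nat.choose_self]
        push_cast; ring
      · rw [if_neg (by omega), if_pos (by omega)]
        simp
    | succ m ihm =>
      rw [X0_rec, ih.1, ih.2, ihm, xcf_id]

theorem stmt4 (j k : ℕ) (hj : 1 ≤ j) (hk : 1 ≤ k) :
    X0 (2*j) (2*k) = 2*j*((j+k).choose j : ℤ) ∧
    X0 (2*j) (2*k-1) = 0 ∧
    X0 (2*j-1) (2*k) = (2*j+2*k-1)*((j+k-1).choose k : ℤ) ∧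
    X0 (2*j-1) (2*k-1) = 2*k*((j+k-1).choose k : ℤ) := by
  obtain ⟨a, rfl⟩ : ∃ a, j = a + 1 := ⟨j - 1, by omega⟩
  obtain ⟨b, rfl⟩ : ∃ b, k = b + 1 := ⟨k - 1, by omega⟩
  have e1 : 2*(a+1) = 2*(a+1) := rfl
  have h1 : X0 (2*(a+1)) (2*(b+1)) = xcf (2*(a+1)) (2*(b+1)) := (main_eq _).2 _
  have h2 : X0 (2*(a+1)) (2*(b+1)-1) = xcf (2*(a+1)) (2*b+1) := by
    rw [show 2*(b+1)-1 = 2*b+1 from by omega]; exact (main_eq _).2 _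
  have h3 : X0 (2*(a+1)-1) (2*(b+1)) = xcf (2*a+1) (2*(b+1)) := by
    rw [show 2*(a+1)-1 = 2*a+1 from by omega]; exact (main_eq _).2 _
  have h4 : X0 (2*(a+1)-1) (2*(b+1)-1) = xcf (2*a+1) (2*b+1) := by
    rw [show 2*(a+1)-1 = 2*a+1 from by omega, show 2*(b+1)-1 = 2*b+1 from by omega]
    exact (main_eq _).2 _
  rw [h1, h2, h3, h4, xcf_ee, xcf_eo, xcf_oe, xcf_oo]
  refine ⟨?_, rfl, ?_, ?_⟩
  · push_cast; ring
  · rw [show a+(b+1) = (a+1)+(b+1)-1 from by omega]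
    push_cast; ring
  · rw [show a+b+1 = (a+1)+(b+1)-1 from by omega]
    push_cast; ring
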